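/- For any integers m ≥ 2 and 0 ≤ f ≤ C(m,2), there exists c > 0 such that every n-vertex graph containing no induced subgraph on exactly m vertices with exactly f edges has a clique or an independent set of size at least c · n^{1/(m-1)}. -/

import Mathlib

open Finset
open scoped Classical

/-- The number of edges of `G` induced inside the vertex set `S`. -/
noncomputable def inducedEdgeCount {V : Type*} [DecidableEq V] (G : SimpleGraph V)
    (S : Finset V) : ℕ :=
  ((S.powersetCard 2).filter (fun p => ∃ a ∈ p, ∃ b ∈ p, G.Adj a b)).card

lemma inducedEdgeCount_insert {V : Type*} [DecidableEq V] (G : SimpleGraph V)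
    (u : V) (S : Finset V) (hu : u ∉ S) :
    inducedEdgeCount G (insert u S) =
      inducedEdgeCount G S + (S.filter (fun v => G.Adj u v)).card := by
  classical
  unfold inducedEdgeCount
  rw [show (2:ℕ) = Nat.succ 1 from rfl, Finset.powersetCard_succ_insert hu, filter_union]
  rw [card_union_of_disjoint]
  · congr 1
    rw [Finset.powersetCard_one]
    -- image part
    rw [Finset.map_eq_image, Finset.image_image]
    have himg : (S.image (fun v => insert u ({v} : Finset V))).filter
        (fun p => ∃ a ∈ p, ∃ b ∈ p, G.Adj a b)
        = (S.filter (fun v => G.Adj u v)).image (fun v => insert u ({v} : Finset V)) := by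
      ext p
      simp only [mem_filter, mem_image]
      constructor
      · rintro ⟨⟨v, hv, rfl⟩, a, ha, b, hb, hab⟩
        refine ⟨v, ⟨hv, ?_⟩, rfl⟩
        simp only [mem_insert, mem_singleton] at ha hb
        rcases ha with rfl | rfl <;> rcases hb with rfl | rfl
        · exact absurd hab (G.irrefl)
        · exact hab
        · exact hab.symm
        · exact absurd hab (G.irrefl)
      · rintro ⟨v, ⟨hv, hadj⟩, rfl⟩
        exact ⟨⟨v, hv, rfl⟩, u, by simp, v, by simp, hadj⟩
    simp only [Function.comp_def, Function.Embedding.coeFn_mk]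
    rw [himg, Finset.card_image_of_injOn]
    intro a ha b hb hab
    have hab' : (insert u ({a} : Finset V)) = insert u ({b} : Finset V) := hab
    have : a ∈ insert u ({b} : Finset V) := by rw [← hab']; simp
    simp only [mem_insert, mem_singleton] at this
    rcases this with rfl | rfl
    · exact absurd (mem_filter.1 ha).1 hu
    · rfl
  · refine Finset.disjoint_left.2 ?_
    intro p hp hp'
    have h1 : p ⊆ S := Finset.mem_powersetCard.1 (mem_filter.1 hp).1 |>.1
    have h2 := (mem_filter.1 hp').1
    rw [Finset.powersetCard_one, Finset.map_eq_image, Finset.image_image] at h2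
    obtain ⟨v, _, rfl⟩ := Finset.mem_image.1 h2
    exact hu (h1 (by simp))

lemma inducedEdgeCount_pair {V : Type*} [DecidableEq V] (G : SimpleGraph V)
    {a b : V} (hab : a ≠ b) :
    inducedEdgeCount G {a, b} = if G.Adj a b then 1 else 0 := by
  classical
  have h1 : ({a, b} : Finset V).card = 2 := by
    rw [card_insert_of_notMem (by simpa using hab), card_singleton]
  unfold inducedEdgeCount
  rw [show (2:ℕ) = ({a,b} : Finset V).card from h1.symm, Finset.powersetCard_self]
  rw [Finset.filter_singleton]
  split_ifs with h h' h'
  · rfl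
  · exfalso; apply h'
    obtain ⟨x, hx, y, hy, hxy⟩ := h
    simp only [mem_insert, mem_singleton] at hx hy
    rcases hx with rfl | rfl <;> rcases hy with rfl | rfl
    · exact absurd hxy (G.irrefl)
    · exact hxy
    · exact hxy.symm
    · exact absurd hxy (G.irrefl)
  · exact absurd ⟨a, by simp, b, by simp, h'⟩ h
  · rfl

lemma greedy_clique {V : Type*} [DecidableEq V] (G : SimpleGraph V) (d : ℕ) :
    ∀ (s : ℕ) (B : Finset V),
      (∀ u ∈ B, ((B.filter (fun v => v ≠ u ∧ ¬ G.Adj u v)).card ≤ d)) →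
      s * (d + 1) ≤ B.card →
      ∃ T : Finset V, T ⊆ B ∧ G.IsClique ↑T ∧ T.card = s := by
  classical
  intro s
  induction s with
  | zero => exact fun B _ _ => ⟨∅, empty_subset _, by simp, rfl⟩
  | succ s ih =>
    intro B hB hcard
    have hBpos : 0 < B.card := lt_of_lt_of_le (by positivity) hcard
    obtain ⟨u, hu⟩ := Finset.card_pos.1 hBpos
    set B' := B.filter (fun v => v ≠ u ∧ G.Adj u v) with hB'
    have hsplit : B ⊆ insert u (B' ∪ B.filter (fun v => v ≠ u ∧ ¬ G.Adj u v)) := by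
      intro v hv
      by_cases hvu : v = u
      · simp [hvu]
      by_cases hadj : G.Adj u v
      · exact Finset.mem_insert_of_mem (Finset.mem_union_left _ (by simp [hB', hv, hvu, hadj]))
      · exact Finset.mem_insert_of_mem (Finset.mem_union_right _ (by simp [hv, hvu, hadj]))
    have hcard' : s * (d + 1) ≤ B'.card := by
      have h1 : B.card ≤ B'.card + d + 1 :=
        calc B.card ≤ (insert u (B' ∪ B.filter (fun v => v ≠ u ∧ ¬ G.Adj u v))).card :=
              Finset.card_le_card hsplit
          _ ≤ (B' ∪ B.filter (fun v => v ≠ u ∧ ¬ G.Adj u v)).card + 1 :=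
              Finset.card_insert_le _ _
          _ ≤ B'.card + (B.filter (fun v => v ≠ u ∧ ¬ G.Adj u v)).card + 1 := by
              exact Nat.add_le_add_right (Finset.card_union_le _ _) 1
          _ ≤ B'.card + d + 1 := by
              exact Nat.add_le_add_right (Nat.add_le_add_left (hB u hu) _) 1
      have h2 : (s+1)*(d+1) = s*(d+1) + (d+1) := by ring
      omega
    have hB'sub : B' ⊆ B := Finset.filter_subset _ _
    have hhyp' : ∀ w ∈ B', ((B'.filter (fun v => v ≠ w ∧ ¬ G.Adj w v)).card ≤ d) := by
      intro w hw
      refine le_trans (Finset.card_le_card ?_) (hB w (hB'sub hw))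
      exact Finset.filter_subset_filter _ hB'sub
    obtain ⟨T, hTsub, hTclique, hTcard⟩ := ih B' hhyp' hcard'
    have huT : u ∉ T := by
      intro h
      exact ((Finset.mem_filter.1 (hTsub h)).2.1) rfl
    refine ⟨insert u T, ?_, ?_, ?_⟩
    · exact Finset.insert_subset hu (hTsub.trans hB'sub)
    · rw [Finset.coe_insert]
      refine hTclique.insert ?_
      intro b hb _
      exact ((Finset.mem_filter.1 (hTsub hb)).2.2)
    · rw [Finset.card_insert_of_notMem huT, hTcard]

lemma num_big (k : ℕ) (hk : 2 ≤ k) {c' N Mc : ℝ} (hc' : 0 < c') (hN : 0 ≤ N)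
    (hM : N ^ (((k:ℝ) - 1) / (k:ℝ)) ≤ Mc) :
    min c' (1/4) * N ^ ((1:ℝ) / (k:ℝ)) ≤ c' * Mc ^ ((1:ℝ) / ((k:ℝ) - 1)) := by
  have hk2 : (2:ℝ) ≤ (k:ℝ) := by exact_mod_cast hk
  have hkne : (k:ℝ) ≠ 0 := by linarith
  have hk1ne : (k:ℝ) - 1 ≠ 0 := by linarith
  have e1 : (N ^ (((k:ℝ) - 1) / (k:ℝ))) ^ ((1:ℝ) / ((k:ℝ) - 1)) = N ^ ((1:ℝ) / (k:ℝ)) := by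
    rw [← Real.rpow_mul hN]
    congr 1
    field_simp
  calc min c' (1/4) * N ^ ((1:ℝ) / (k:ℝ))
      ≤ c' * N ^ ((1:ℝ) / (k:ℝ)) :=
        mul_le_mul_of_nonneg_right (min_le_left _ _) (Real.rpow_nonneg hN _)
    _ = c' * (N ^ (((k:ℝ) - 1) / (k:ℝ))) ^ ((1:ℝ) / ((k:ℝ) - 1)) := by rw [e1]
    _ ≤ c' * Mc ^ ((1:ℝ) / ((k:ℝ) - 1)) := by
        refine mul_le_mul_of_nonneg_left ?_ hc'.le
        exact Real.rpow_le_rpow (Real.rpow_nonneg hN _) hM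
          (le_of_lt (div_pos one_pos (by linarith)))

lemma num_small (k N d s : ℕ) (hk : 2 ≤ k)
    (hd : (d:ℝ) ≤ (N:ℝ) ^ (((k:ℝ) - 1) / (k:ℝ)))
    (hs : (N:ℝ) < ((s:ℝ) + 1) * ((d:ℝ) + 1))
    (h4 : 4 < (N:ℝ) ^ ((1:ℝ) / (k:ℝ)))
    (hN1 : 1 ≤ N) :
    (1/4 : ℝ) * (N:ℝ) ^ ((1:ℝ) / (k:ℝ)) ≤ s := by
  have hk2 : (2:ℝ) ≤ (k:ℝ) := by exact_mod_cast hk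
  have hkne : (k:ℝ) ≠ 0 := by linarith
  have hN1' : (1:ℝ) ≤ (N:ℝ) := by exact_mod_cast hN1
  have hNpos : (0:ℝ) < (N:ℝ) := by linarith
  set x := (N:ℝ) ^ (((k:ℝ) - 1) / (k:ℝ)) with hxdef
  set y := (N:ℝ) ^ ((1:ℝ) / (k:ℝ)) with hydef
  have hxy : y * x = N := by
    rw [hxdef, hydef, ← Real.rpow_add hNpos]
    rw [show (1:ℝ)/(k:ℝ) + ((k:ℝ) - 1)/(k:ℝ) = 1 by field_simp; ring]
    exact Real.rpow_one _
  have hexp0 : (0:ℝ) ≤ ((k:ℝ) - 1) / (k:ℝ) := by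
    apply div_nonneg <;> linarith
  have hx1 : (1:ℝ) ≤ x := by
    calc (1:ℝ) = (1:ℝ) ^ (((k:ℝ) - 1) / (k:ℝ)) := (Real.one_rpow _).symm
      _ ≤ x := Real.rpow_le_rpow (by norm_num) hN1' hexp0
  have hxpos : (0:ℝ) < x := by linarith
  have hs0 : (0:ℝ) ≤ (s:ℝ) := Nat.cast_nonneg s
  have h1 : y * x < (2 * ((s:ℝ) + 1)) * x := by
    calc y * x = (N:ℝ) := hxy
      _ < ((s:ℝ) + 1) * ((d:ℝ) + 1) := hs
      _ ≤ ((s:ℝ) + 1) * (x + 1) := by nlinarith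
      _ ≤ ((s:ℝ) + 1) * (2 * x) := by nlinarith
      _ = (2 * ((s:ℝ) + 1)) * x := by ring
  have h2 : y < 2 * ((s:ℝ) + 1) := lt_of_mul_lt_mul_right h1 hxpos.le
  linarith

lemma key_lemma (m : ℕ) (hm : 2 ≤ m) : ∀ f : ℕ, f ≤ m.choose 2 →
    ∃ c : ℝ, 0 < c ∧ ∀ (n : ℕ) (G : SimpleGraph (Fin n)) (A : Finset (Fin n)),
      (∀ S : Finset (Fin n), S ⊆ A → S.card = m → inducedEdgeCount G S ≠ f) →
      ∃ T : Finset (Fin n), (G.IsClique ↑T ∨ Gᶜ.IsClique ↑T) ∧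
        c * (A.card : ℝ) ^ ((1 : ℝ) / ((m : ℝ) - 1)) ≤ T.card := by
  induction m, hm using Nat.le_induction with
  | base =>
    intro f hf
    have hf1 : f ≤ 1 := by simpa [Nat.choose] using hf
    have hexp : ((1:ℝ) / (((2:ℕ):ℝ) - 1)) = 1 := by norm_num
    refine ⟨1, one_pos, fun n G A hyp => ?_⟩
    have hbound : (1:ℝ) * (A.card : ℝ) ^ ((1:ℝ) / (((2:ℕ):ℝ) - 1)) ≤ A.card := by
      rw [hexp, Real.rpow_one, one_mul]
    interval_cases f
    · refine ⟨A, Or.inl ?_, hbound⟩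
      intro a ha b hb hne
      have hsub : ({a, b} : Finset (Fin n)) ⊆ A :=
        Finset.insert_subset (Finset.mem_coe.1 ha)
          (Finset.singleton_subset_iff.2 (Finset.mem_coe.1 hb))
      have hcard : ({a, b} : Finset (Fin n)).card = 2 := by
        rw [Finset.card_insert_of_notMem (by simpa using hne), Finset.card_singleton]
      have := hyp {a, b} hsub hcard
      rw [inducedEdgeCount_pair G hne] at this
      by_contra hadj
      simp [hadj] at this
    · refine ⟨A, Or.inr ?_, hbound⟩
      intro a ha b hb hne
      have hsub : ({a, b} : Finset (Fin n)) ⊆ A :=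
        Finset.insert_subset (Finset.mem_coe.1 ha)
          (Finset.singleton_subset_iff.2 (Finset.mem_coe.1 hb))
      have hcard : ({a, b} : Finset (Fin n)).card = 2 := by
        rw [Finset.card_insert_of_notMem (by simpa using hne), Finset.card_singleton]
      have := hyp {a, b} hsub hcard
      rw [inducedEdgeCount_pair G hne] at this
      refine ⟨hne, fun hadj => ?_⟩
      simp [hadj] at this
  | succ k hk ih =>
    intro f hf
    have hchoose : (k+1).choose 2 = k.choose 2 + k := by
      rw [Nat.choose_two_right, Nat.choose_two_right, Nat.triangle_succ]
    have hck : k - 1 ≤ k.choose 2 := by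
      rw [Nat.choose_two_right]
      rw [Nat.le_div_iff_mul_le (by norm_num)]
      have h2 : 2 ≤ k := hk
      nlinarith [Nat.sub_le k 1]
    have hk2R : (2:ℝ) ≤ (k:ℝ) := by exact_mod_cast hk
    have hexpeq : (1:ℝ) / ((((k:ℕ)+1:ℕ):ℝ) - 1) = (1:ℝ) / (k:ℝ) := by push_cast; ring_nf
    have hexpne : (1:ℝ) / (k:ℝ) ≠ 0 := by
      apply ne_of_gt; apply div_pos one_pos; linarith
    by_cases hsmall : f ≤ k.choose 2
    · -- use non-neighborhoods; greedy gives a clique in G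
      obtain ⟨c', hc', H'⟩ := ih f hsmall
      refine ⟨min c' (1/4), lt_min hc' (by norm_num), ?_⟩
      intro n G A hyp
      simp only [hexpeq]
      by_cases hN4 : ((A.card:ℕ):ℝ) ^ ((1:ℝ)/(k:ℝ)) ≤ 4
      · rcases A.eq_empty_or_nonempty with rfl | ⟨a, ha⟩
        · refine ⟨∅, Or.inl (by simpa using SimpleGraph.isClique_empty), ?_⟩
          simp only [Finset.card_empty, Nat.cast_zero, Real.zero_rpow hexpne, mul_zero,
            le_refl]
        · refine ⟨{a}, Or.inl (by simpa using SimpleGraph.isClique_singleton (G := G) a), ?_⟩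
          rw [Finset.card_singleton]
          calc min c' (1/4) * ((A.card:ℕ):ℝ) ^ ((1:ℝ)/(k:ℝ))
              ≤ (1/4) * 4 :=
                mul_le_mul (min_le_right _ _) hN4 (Real.rpow_nonneg (by positivity) _)
                  (by norm_num)
            _ = 1 := by norm_num
            _ = ((1:ℕ):ℝ) := by norm_num
      · push_neg at hN4
        have hN1 : 1 ≤ A.card := by
          by_contra h
          have : A.card = 0 := by omega
          rw [this, Nat.cast_zero, Real.zero_rpow hexpne] at hN4
          linarith
        set x := ((A.card:ℕ):ℝ) ^ (((k:ℝ) - 1)/(k:ℝ)) with hxdef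
        set d := ⌊x⌋₊ with hddef
        by_cases hbig : ∃ u ∈ A, d + 1 ≤ (A.filter (fun v => v ≠ u ∧ ¬ G.Adj u v)).card
        · obtain ⟨u, huA, hMcard⟩ := hbig
          set M := A.filter (fun v => v ≠ u ∧ ¬ G.Adj u v) with hMdef
          have hyp' : ∀ S : Finset (Fin n), S ⊆ M → S.card = k → inducedEdgeCount G S ≠ f := by
            intro S hS hScard hcount
            have huS : u ∉ S := fun h => ((Finset.mem_filter.1 (hS h)).2.1 rfl)
            have hins : inducedEdgeCount G (insert u S) = inducedEdgeCount G S := by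
              rw [inducedEdgeCount_insert G u S huS]
              have h0 : S.filter (fun v => G.Adj u v) = ∅ := by
                refine Finset.filter_eq_empty_iff.2 ?_
                intro v hv hadj
                exact ((Finset.mem_filter.1 (hS hv)).2.2) hadj
              rw [h0]; simp
            exact hyp (insert u S)
              (Finset.insert_subset huA (hS.trans (Finset.filter_subset _ _)))
              (by rw [Finset.card_insert_of_notMem huS, hScard])
              (by rw [hins, hcount])
          obtain ⟨T, hhom, hbound⟩ := H' n G M hyp'
          refine ⟨T, hhom, le_trans ?_ hbound⟩
          apply num_big k hk hc' (by positivity)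
          calc x ≤ (d:ℝ) + 1 := (Nat.lt_floor_add_one x).le
            _ ≤ (M.card : ℝ) := by exact_mod_cast hMcard
        · push_neg at hbig
          have hsmalldeg : ∀ u ∈ A, (A.filter (fun v => v ≠ u ∧ ¬ G.Adj u v)).card ≤ d :=
            fun u hu => Nat.lt_succ_iff.1 (hbig u hu)
          set s := A.card / (d+1) with hsdef
          obtain ⟨T, hTsub, hTclique, hTcard⟩ :=
            greedy_clique G d s A hsmalldeg (Nat.div_mul_le_self _ _)
          refine ⟨T, Or.inl hTclique, ?_⟩
          rw [hTcard]
          have hslt : A.card < (s+1)*(d+1) := by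
            have h1 : (d+1) * s + A.card % (d+1) = A.card := by
              rw [hsdef]; exact Nat.div_add_mod _ _
            have h2 : A.card % (d+1) < d + 1 := Nat.mod_lt _ (by omega)
            calc A.card = (d+1) * s + A.card % (d+1) := h1.symm
              _ < (d+1) * s + (d+1) := Nat.add_lt_add_left h2 _
              _ = (s+1)*(d+1) := by ring
          have hnum := num_small k A.card d s hk (Nat.floor_le (by positivity))
            (by exact_mod_cast hslt) hN4 hN1
          calc min c' (1/4) * ((A.card:ℕ):ℝ) ^ ((1:ℝ)/(k:ℝ))
              ≤ (1/4) * ((A.card:ℕ):ℝ) ^ ((1:ℝ)/(k:ℝ)) :=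
                mul_le_mul_of_nonneg_right (min_le_right _ _)
                  (Real.rpow_nonneg (by positivity) _)
            _ ≤ (s:ℝ) := hnum
    · -- use neighborhoods; greedy gives a clique in Gᶜ
      have hfk : k ≤ f := by
        have := Nat.lt_of_not_le hsmall
        omega
      have hf' : f - k ≤ k.choose 2 := by omega
      obtain ⟨c', hc', H'⟩ := ih (f - k) hf'
      refine ⟨min c' (1/4), lt_min hc' (by norm_num), ?_⟩
      intro n G A hyp
      simp only [hexpeq]
      by_cases hN4 : ((A.card:ℕ):ℝ) ^ ((1:ℝ)/(k:ℝ)) ≤ 4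
      · rcases A.eq_empty_or_nonempty with rfl | ⟨a, ha⟩
        · refine ⟨∅, Or.inl (by simpa using SimpleGraph.isClique_empty), ?_⟩
          simp only [Finset.card_empty, Nat.cast_zero, Real.zero_rpow hexpne, mul_zero,
            le_refl]
        · refine ⟨{a}, Or.inl (by simpa using SimpleGraph.isClique_singleton (G := G) a), ?_⟩
          rw [Finset.card_singleton]
          calc min c' (1/4) * ((A.card:ℕ):ℝ) ^ ((1:ℝ)/(k:ℝ))
              ≤ (1/4) * 4 :=
                mul_le_mul (min_le_right _ _) hN4 (Real.rpow_nonneg (by positivity) _)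
                  (by norm_num)
            _ = 1 := by norm_num
            _ = ((1:ℕ):ℝ) := by norm_num
      · push_neg at hN4
        have hN1 : 1 ≤ A.card := by
          by_contra h
          have : A.card = 0 := by omega
          rw [this, Nat.cast_zero, Real.zero_rpow hexpne] at hN4
          linarith
        set x := ((A.card:ℕ):ℝ) ^ (((k:ℝ) - 1)/(k:ℝ)) with hxdef
        set d := ⌊x⌋₊ with hddef
        by_cases hbig : ∃ u ∈ A, d + 1 ≤ (A.filter (fun v => v ≠ u ∧ G.Adj u v)).card
        · obtain ⟨u, huA, hMcard⟩ := hbig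
          set M := A.filter (fun v => v ≠ u ∧ G.Adj u v) with hMdef
          have hyp' : ∀ S : Finset (Fin n), S ⊆ M → S.card = k →
              inducedEdgeCount G S ≠ f - k := by
            intro S hS hScard hcount
            have huS : u ∉ S := fun h => ((Finset.mem_filter.1 (hS h)).2.1 rfl)
            have hins : inducedEdgeCount G (insert u S) = inducedEdgeCount G S + k := by
              rw [inducedEdgeCount_insert G u S huS]
              congr 1
              rw [Finset.filter_true_of_mem, hScard]
              intro v hv
              exact ((Finset.mem_filter.1 (hS hv)).2.2)
            refine hyp (insert u S)
              (Finset.insert_subset huA (hS.trans (Finset.filter_subset _ _)))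
              (by rw [Finset.card_insert_of_notMem huS, hScard]) ?_
            rw [hins, hcount]
            omega
          obtain ⟨T, hhom, hbound⟩ := H' n G M hyp'
          refine ⟨T, hhom, le_trans ?_ hbound⟩
          apply num_big k hk hc' (by positivity)
          calc x ≤ (d:ℝ) + 1 := (Nat.lt_floor_add_one x).le
            _ ≤ (M.card : ℝ) := by exact_mod_cast hMcard
        · push_neg at hbig
          set s := A.card / (d+1) with hsdef
          obtain ⟨T, hTsub, hTclique, hTcard⟩ :=
            greedy_clique Gᶜ d s A (by
              intro u hu
              refine le_trans (le_of_eq (congrArg Finset.card ?_)) (Nat.lt_succ_iff.1 (hbig u hu))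
              ext v
              simp only [Finset.mem_filter, SimpleGraph.compl_adj, not_and, not_not]
              constructor
              · rintro ⟨hvA, hne, h⟩
                exact ⟨hvA, hne, h (fun he => hne he.symm)⟩
              · rintro ⟨hvA, hne, h⟩
                exact ⟨hvA, hne, fun _ => h⟩) (Nat.div_mul_le_self _ _)
          refine ⟨T, Or.inr hTclique, ?_⟩
          rw [hTcard]
          have hslt : A.card < (s+1)*(d+1) := by
            have h1 : (d+1) * s + A.card % (d+1) = A.card := by
              rw [hsdef]; exact Nat.div_add_mod _ _
            have h2 : A.card % (d+1) < d + 1 := Nat.mod_lt _ (by omega)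
            calc A.card = (d+1) * s + A.card % (d+1) := h1.symm
              _ < (d+1) * s + (d+1) := Nat.add_lt_add_left h2 _
              _ = (s+1)*(d+1) := by ring
          have hnum := num_small k A.card d s hk (Nat.floor_le (by positivity))
            (by exact_mod_cast hslt) hN4 hN1
          calc min c' (1/4) * ((A.card:ℕ):ℝ) ^ ((1:ℝ)/(k:ℝ))
              ≤ (1/4) * ((A.card:ℕ):ℝ) ^ ((1:ℝ)/(k:ℝ)) :=
                mul_le_mul_of_nonneg_right (min_le_right _ _)
                  (Real.rpow_nonneg (by positivity) _)
            _ ≤ (s:ℝ) := hnum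

theorem stmt_0 (m f : ℕ) (hm : 2 ≤ m) (hf : f ≤ m.choose 2) :
    ∃ c : ℝ, 0 < c ∧ ∀ (n : ℕ) (G : SimpleGraph (Fin n)),
      (∀ S : Finset (Fin n), S.card = m → inducedEdgeCount G S ≠ f) →
      ∃ T : Finset (Fin n), (G.IsClique ↑T ∨ Gᶜ.IsClique ↑T) ∧
        c * (n : ℝ) ^ ((1 : ℝ) / ((m : ℝ) - 1)) ≤ T.card := by
  obtain ⟨c, hc, H⟩ := key_lemma m hm f hf
  refine ⟨c, hc, fun n G hyp => ?_⟩
  obtain ⟨T, hhom, hbound⟩ := H n G Finset.univ (fun S _ hS => hyp S hS)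
  refine ⟨T, hhom, ?_⟩
  rwa [Finset.card_univ, Fintype.card_fin] at hbound
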